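/- For any mean-zero real random variable Y with finite moments and any positive integer ℓ, the ℓ-th cumulant satisfies |κ_ℓ(Y)| ≤ E[|Y|^ℓ]·e^ℓ·ℓ!. -/

import Mathlib

open MeasureTheory


-- Nat combinatorial bound: (m-1).choose (j-1) * j! ≤ m! for 1 ≤ j ≤ m
lemma aux_choose_fact {j m : ℕ} (hj : 1 ≤ j) (hjm : j ≤ m) :
    (m - 1).choose (j - 1) * Nat.factorial j ≤ Nat.factorial m := by
  obtain ⟨j, rfl⟩ := Nat.exists_eq_add_of_le hj
  obtain ⟨m, rfl⟩ := Nat.exists_eq_add_of_le hjm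
  have e1 : 1 + j + m - 1 = j + m := by omega
  have e2 : 1 + j - 1 = j := by omega
  rw [e1, e2]
  have h1 : (j + m).choose j * Nat.factorial j ≤ Nat.factorial (j + m) := by
    have := Nat.choose_mul_factorial_mul_factorial (Nat.le_add_right j m)
    calc (j + m).choose j * Nat.factorial j
        ≤ (j + m).choose j * Nat.factorial j * Nat.factorial (j + m - j) :=
          Nat.le_mul_of_pos_right _ (Nat.factorial_pos _)
      _ = Nat.factorial (j + m) := this
  calc (j + m).choose j * Nat.factorial (1 + j)
      = (j + m).choose j * (Nat.factorial j * (1 + j)) := by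
        rw [Nat.add_comm 1 j, Nat.factorial_succ, Nat.mul_comm (j+1)]
    _ = (j + m).choose j * Nat.factorial j * (1 + j) := by ring
    _ ≤ Nat.factorial (j + m) * (1 + j) := Nat.mul_le_mul_right _ h1
    _ ≤ Nat.factorial (j + m) * (1 + j + m) := by
        exact Nat.mul_le_mul_left _ (by omega)
    _ = Nat.factorial (1 + j + m) := by
        have : 1 + j + m = (j + m) + 1 := by omega
        rw [this, Nat.factorial_succ, Nat.mul_comm]
  
-- numeric inequality
lemma aux_numeric (m : ℕ) (hm : 1 ≤ m) :
    1 + ∑ j ∈ Finset.Ico 1 m,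
        ((m - 1).choose (j - 1) : ℝ) * Real.exp j * (Nat.factorial j : ℝ)
      ≤ Real.exp m * (Nat.factorial m : ℝ) := by
  have he : (2 : ℝ) ≤ Real.exp 1 := by
    have := Real.add_one_le_exp 1; linarith
  have hE : Real.exp (m : ℝ) = Real.exp 1 ^ m := (Real.exp_one_pow m).symm
  have hF : (1 : ℝ) ≤ (Nat.factorial m : ℝ) := by
    exact_mod_cast Nat.one_le_iff_ne_zero.2 (Nat.factorial_pos m).ne'
  have hstep : ∑ j ∈ Finset.Ico 1 m,
      ((m - 1).choose (j - 1) : ℝ) * Real.exp j * (Nat.factorial j : ℝ)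
      ≤ (Nat.factorial m : ℝ) * ∑ j ∈ Finset.range m, Real.exp 1 ^ j := by
    rw [Finset.mul_sum]
    have hsub : Finset.Ico 1 m ⊆ Finset.range m := by
      intro x hx; simp only [Finset.mem_Ico] at hx; exact Finset.mem_range.2 hx.2
    refine le_trans (Finset.sum_le_sum ?_)
      (Finset.sum_le_sum_of_subset_of_nonneg hsub ?_)
    · intro j hj
      simp only [Finset.mem_Ico] at hj
      have hc : ((m - 1).choose (j - 1) : ℝ) * (Nat.factorial j : ℝ)
          ≤ (Nat.factorial m : ℝ) := by
        exact_mod_cast aux_choose_fact hj.1 hj.2.le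
      have hexp : Real.exp (j : ℝ) = Real.exp 1 ^ j := (Real.exp_one_pow j).symm
      calc ((m - 1).choose (j - 1) : ℝ) * Real.exp j * (Nat.factorial j : ℝ)
          = ((m - 1).choose (j - 1) : ℝ) * (Nat.factorial j : ℝ) * Real.exp 1 ^ j := by
            rw [hexp]; ring
        _ ≤ (Nat.factorial m : ℝ) * Real.exp 1 ^ j := by
            have : (0:ℝ) < Real.exp 1 ^ j := by positivity
            nlinarith
    · intro j _ _; positivity
  have hgeom : ∑ j ∈ Finset.range m, Real.exp 1 ^ j ≤ Real.exp 1 ^ m - 1 := by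
    have hne : Real.exp 1 ≠ 1 := by linarith
    rw [geom_sum_eq hne]
    have h1 : (0:ℝ) ≤ Real.exp 1 ^ m - 1 := by
      have : (1:ℝ) ≤ Real.exp 1 ^ m := one_le_pow₀ (by linarith)
      linarith
    have h2 : (1:ℝ) ≤ Real.exp 1 - 1 := by linarith
    exact div_le_self h1 h2
  have hEm : (1:ℝ) ≤ Real.exp 1 ^ m := one_le_pow₀ (by linarith)
  rw [hE]
  nlinarith [mul_le_mul_of_nonneg_left hgeom (by positivity : (0:ℝ) ≤ (Nat.factorial m : ℝ))]



lemma aux_mom_le {Ω : Type*} [MeasurableSpace Ω] (μ : Measure Ω) [IsProbabilityMeasure μ]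
    (Y : Ω → ℝ) (hYm : Measurable Y) {k m : ℕ} (hk : k ≤ m) (hm : 0 < m) :
    ∫⁻ ω, (‖Y ω‖₊ : ENNReal) ^ k ∂μ ≤ (∫⁻ ω, (‖Y ω‖₊ : ENNReal) ^ m ∂μ) ^ ((k : ℝ) / m) := by
  have hmeas : AEMeasurable (fun ω => (‖Y ω‖₊ : ENNReal) ^ m) μ :=
    (hYm.nnnorm.coe_nnreal_ennreal.pow_const m).aemeasurable
  have hmne : ((m : ℝ)) ≠ 0 := by exact_mod_cast hm.ne'
  have hp : (0:ℝ) ≤ (k:ℝ)/m := by positivity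
  have hq : (0:ℝ) ≤ ((m-k : ℕ):ℝ)/m := by positivity
  have hpq : (k:ℝ)/m + ((m-k : ℕ):ℝ)/m = 1 := by
    rw [← add_div, div_eq_one_iff_eq hmne, Nat.cast_sub hk]
    ring
  have h := ENNReal.lintegral_mul_norm_pow_le (μ := μ)
    (g := fun _ => (1 : ENNReal)) hmeas aemeasurable_const hp hq hpq
  simp only [ENNReal.one_rpow, mul_one, lintegral_one, measure_univ] at h
  have hpt : ∀ ω, ((‖Y ω‖₊ : ENNReal) ^ m) ^ ((k:ℝ)/m) = (‖Y ω‖₊ : ENNReal) ^ k := by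
    intro ω
    rw [← ENNReal.rpow_natCast _ m, ← ENNReal.rpow_mul]
    rw [show (m : ℝ) * ((k:ℝ)/m) = (k:ℝ) by field_simp]
    rw [ENNReal.rpow_natCast]
  simp only [hpt] at h
  exact h

lemma aux_holder_real {Ω : Type*} [MeasurableSpace Ω] (μ : Measure Ω) [IsProbabilityMeasure μ]
    (Y : Ω → ℝ) (hYm : Measurable Y) {j m : ℕ} (hj : 1 ≤ j) (hjm : j < m)
    (hm : Integrable (fun ω => |Y ω| ^ m) μ) :
    (∫ ω, |Y ω| ^ j ∂μ) * (∫ ω, |Y ω| ^ (m - j) ∂μ) ≤ ∫ ω, |Y ω| ^ m ∂μ := by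
  set A : ℕ → ENNReal := fun k => ∫⁻ ω, (‖Y ω‖₊ : ENNReal) ^ k ∂μ with hA
  have hAeq : ∀ k, A k = ∫⁻ ω, ENNReal.ofReal (|Y ω| ^ k) ∂μ := by
    intro k
    refine lintegral_congr fun ω => ?_
    rw [← Real.norm_eq_abs, ENNReal.ofReal_pow (norm_nonneg _), ofReal_norm, enorm_eq_nnnorm]
  have hrepr : ∀ k, ∫ ω, |Y ω| ^ k ∂μ = (A k).toReal := by
    intro k
    rw [integral_eq_lintegral_of_nonneg_ae
      (Filter.Eventually.of_forall fun ω => by positivity)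
      ((hYm.abs.pow_const k).aestronglyMeasurable), hAeq k]
  have hAm_ne : A m ≠ ⊤ := by
    rw [hAeq m]
    have h1 := hm.hasFiniteIntegral
    rw [hasFiniteIntegral_iff_ofReal (Filter.Eventually.of_forall fun ω => by positivity)] at h1
    exact h1.ne
  have hmpos : 0 < m := lt_of_le_of_lt (Nat.zero_le j) hjm
  have key1 : A j ≤ (A m) ^ ((j : ℝ) / m) := aux_mom_le μ Y hYm hjm.le hmpos
  have key2 : A (m - j) ≤ (A m) ^ (((m - j : ℕ) : ℝ) / m) :=
    aux_mom_le μ Y hYm (Nat.sub_le m j) hmpos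
  have hmul : A j * A (m - j) ≤ A m := by
    rcases eq_or_ne (A m) 0 with h0 | h0
    · rw [h0, ENNReal.zero_rpow_of_pos (by positivity)] at key1
      rw [le_zero_iff] at key1
      rw [key1, zero_mul, h0]
    · calc A j * A (m - j) ≤ (A m) ^ ((j : ℝ) / m) * (A m) ^ (((m - j : ℕ) : ℝ) / m) :=
          mul_le_mul' key1 key2
        _ = (A m) ^ ((j : ℝ) / m + ((m - j : ℕ) : ℝ) / m) :=
          (ENNReal.rpow_add _ _ h0 hAm_ne).symm
        _ = (A m) ^ (1 : ℝ) := by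
          congr 1
          rw [← add_div, div_eq_one_iff_eq (by exact_mod_cast hmpos.ne'),
            Nat.cast_sub hjm.le]
          ring
        _ = A m := ENNReal.rpow_one _
  rw [hrepr j, hrepr (m - j), hrepr m, ← ENNReal.toReal_mul]
  exact ENNReal.toReal_mono hAm_ne hmul

theorem stmt7 {Ω : Type*} [MeasurableSpace Ω] (μ : Measure Ω) [IsProbabilityMeasure μ]
    (Y : Ω → ℝ) (hYm : Measurable Y) (ℓ : ℕ) (hℓ : 1 ≤ ℓ)
    (hint : ∀ j ≤ ℓ, Integrable (fun ω => |Y ω| ^ j) μ)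
    (hmean : ∫ ω, Y ω ∂μ = 0)
    (κ : ℕ → ℝ)
    (hκ : ∀ m, 1 ≤ m → m ≤ ℓ →
      κ m = (∫ ω, Y ω ^ m ∂μ) -
        ∑ j ∈ Finset.Ico 1 m,
          ((m - 1).choose (j - 1) : ℝ) * κ j * ∫ ω, Y ω ^ (m - j) ∂μ) :
    |κ ℓ| ≤ (∫ ω, |Y ω| ^ ℓ ∂μ) * Real.exp ℓ * (Nat.factorial ℓ : ℝ) := by
  have hMnn : ∀ k, 0 ≤ ∫ ω, |Y ω| ^ k ∂μ :=
    fun k => integral_nonneg fun ω => by positivity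
  have habs : ∀ k, |∫ ω, Y ω ^ k ∂μ| ≤ ∫ ω, |Y ω| ^ k ∂μ := by
    intro k
    calc |∫ ω, Y ω ^ k ∂μ| = ‖∫ ω, Y ω ^ k ∂μ‖ := (Real.norm_eq_abs _).symm
      _ ≤ ∫ ω, ‖Y ω ^ k‖ ∂μ := norm_integral_le_integral_norm _
      _ = ∫ ω, |Y ω| ^ k ∂μ := by
        refine integral_congr_ae (Filter.Eventually.of_forall fun ω => ?_)
        show ‖Y ω ^ k‖ = |Y ω| ^ k
        rw [Real.norm_eq_abs, abs_pow]
  have main : ∀ m, m ≤ ℓ → 1 ≤ m →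
      |κ m| ≤ (∫ ω, |Y ω| ^ m ∂μ) * (Real.exp m * (Nat.factorial m : ℝ)) := by
    intro m
    induction m using Nat.strong_induction_on with
    | _ m ih =>
      intro hmℓ hm1
      rw [hκ m hm1 hmℓ]
      have hsum : |∑ j ∈ Finset.Ico 1 m,
            ((m - 1).choose (j - 1) : ℝ) * κ j * ∫ ω, Y ω ^ (m - j) ∂μ|
          ≤ ∑ j ∈ Finset.Ico 1 m,
            ((m - 1).choose (j - 1) : ℝ) * Real.exp j * (Nat.factorial j : ℝ) *
              (∫ ω, |Y ω| ^ m ∂μ) := by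
        refine (Finset.abs_sum_le_sum_abs _ _).trans (Finset.sum_le_sum fun j hj => ?_)
        simp only [Finset.mem_Ico] at hj
        have hj1 : 1 ≤ j := hj.1
        have hjm : j < m := hj.2
        have hC : (0:ℝ) ≤ ((m - 1).choose (j - 1) : ℝ) := Nat.cast_nonneg _
        have hkj : |κ j| ≤ (∫ ω, |Y ω| ^ j ∂μ) * (Real.exp j * (Nat.factorial j : ℝ)) :=
          ih j hjm (hjm.le.trans hmℓ) hj1
        have hint2 : |∫ ω, Y ω ^ (m - j) ∂μ| ≤ ∫ ω, |Y ω| ^ (m - j) ∂μ := habs _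
        have hhold : (∫ ω, |Y ω| ^ j ∂μ) * (∫ ω, |Y ω| ^ (m - j) ∂μ)
            ≤ ∫ ω, |Y ω| ^ m ∂μ :=
          aux_holder_real μ Y hYm hj1 hjm (hint m hmℓ)
        have hE : (0:ℝ) ≤ Real.exp j * (Nat.factorial j : ℝ) := by positivity
        calc |((m - 1).choose (j - 1) : ℝ) * κ j * ∫ ω, Y ω ^ (m - j) ∂μ|
            = ((m - 1).choose (j - 1) : ℝ) * |κ j| * |∫ ω, Y ω ^ (m - j) ∂μ| := by
              rw [abs_mul, abs_mul, abs_of_nonneg hC]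
          _ ≤ ((m - 1).choose (j - 1) : ℝ) *
                ((∫ ω, |Y ω| ^ j ∂μ) * (Real.exp j * (Nat.factorial j : ℝ))) *
                (∫ ω, |Y ω| ^ (m - j) ∂μ) := by
              refine mul_le_mul (mul_le_mul le_rfl hkj (abs_nonneg _) hC) hint2
                (abs_nonneg _) ?_
              have := hMnn j
              positivity
          _ = ((m - 1).choose (j - 1) : ℝ) * Real.exp j * (Nat.factorial j : ℝ) *
                ((∫ ω, |Y ω| ^ j ∂μ) * (∫ ω, |Y ω| ^ (m - j) ∂μ)) := by ring
          _ ≤ ((m - 1).choose (j - 1) : ℝ) * Real.exp j * (Nat.factorial j : ℝ) *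
                (∫ ω, |Y ω| ^ m ∂μ) := by
              refine mul_le_mul_of_nonneg_left hhold ?_
              positivity
      calc |(∫ ω, Y ω ^ m ∂μ) - ∑ j ∈ Finset.Ico 1 m,
              ((m - 1).choose (j - 1) : ℝ) * κ j * ∫ ω, Y ω ^ (m - j) ∂μ|
          ≤ |∫ ω, Y ω ^ m ∂μ| + |∑ j ∈ Finset.Ico 1 m,
              ((m - 1).choose (j - 1) : ℝ) * κ j * ∫ ω, Y ω ^ (m - j) ∂μ| :=
            by rw [sub_eq_add_neg]
               exact le_trans (abs_add_le _ _) (by rw [abs_neg])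
        _ ≤ (∫ ω, |Y ω| ^ m ∂μ) + ∑ j ∈ Finset.Ico 1 m,
              ((m - 1).choose (j - 1) : ℝ) * Real.exp j * (Nat.factorial j : ℝ) *
                (∫ ω, |Y ω| ^ m ∂μ) :=
            add_le_add (habs m) hsum
        _ = (∫ ω, |Y ω| ^ m ∂μ) * (1 + ∑ j ∈ Finset.Ico 1 m,
              ((m - 1).choose (j - 1) : ℝ) * Real.exp j * (Nat.factorial j : ℝ)) := by
            rw [← Finset.sum_mul]; ring
        _ ≤ (∫ ω, |Y ω| ^ m ∂μ) * (Real.exp m * (Nat.factorial m : ℝ)) :=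
            mul_le_mul_of_nonneg_left (aux_numeric m hm1) (hMnn m)
  rw [mul_assoc]
  exact main ℓ le_rfl hℓ
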